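/- Let G be a simple graph that is a cactus, in the sense that any two cycles of G either have equal edge sets or have disjoint edge sets (no two distinct cycles share an edge). Then any two cycles of G with disjoint edge sets share at most one common vertex; that is, if c₁ and c₂ are cycles of G whose edge sets are disjoint, then the intersection of their vertex supports has cardinality at most 1. -/

import Mathlib

open SimpleGraph Walk

/-- Walking along `T`, we can stop at the first vertex belonging to `S`
(provided the endpoint of `T` lies in `S`). -/
lemma cactus_aux_seg {V : Type*} [DecidableEq V] {G : SimpleGraph V} (S : List V) :
    ∀ {x y : V} (T : G.Walk x y), y ∈ S →
      ∃ w, w ∈ S ∧ ∃ R : G.Walk x w, R.edges ⊆ T.edges ∧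
        (∃ rest, T.support = R.support ++ rest) ∧
        (∀ z ∈ R.support, z ∈ S → z = w) ∧ (T.IsPath → R.IsPath) := by
  intro x y T
  induction T with
  | nil =>
    intro hx
    exact ⟨_, hx, Walk.nil, by simp, ⟨[], by simp⟩, by simp, fun _ => Walk.IsPath.nil⟩
  | @cons s t y' h T' IH =>
    intro hy
    by_cases hx : s ∈ S
    · exact ⟨s, hx, Walk.nil, by simp, ⟨T'.support, by simp⟩,
        by simp, fun _ => Walk.IsPath.nil⟩
    · obtain ⟨w, hwS, R', hRe, ⟨rest, hrest⟩, hRS, hRP⟩ := IH hy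
      refine ⟨w, hwS, Walk.cons h R', ?_, ⟨rest, ?_⟩, ?_, ?_⟩
      · intro e he
        rw [Walk.edges_cons, List.mem_cons] at he ⊢
        exact he.imp id (fun h' => hRe h')
      · rw [Walk.support_cons, Walk.support_cons, hrest]; rfl
      · intro z hz hzS
        rw [Walk.support_cons, List.mem_cons] at hz
        rcases hz with rfl | hz
        · exact absurd hzS hx
        · exact hRS z hz hzS
      · intro hp
        rw [Walk.cons_isPath_iff] at hp ⊢
        refine ⟨hRP hp.1, fun hxR => hp.2 ?_⟩
        have : s ∈ R'.support ++ rest := List.mem_append_left _ hxR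
        rw [← hrest] at this
        exact this

/-- In a nonempty closed walk, every vertex of the support lies in the tail
of the support. -/
lemma cactus_aux_mem_tail {V : Type*} {G : SimpleGraph V} {a : V} (c : G.Walk a a)
    (hc : c ≠ Walk.nil) {z : V} (hz : z ∈ c.support) : z ∈ c.support.tail := by
  cases c with
  | nil => exact absurd rfl hc
  | cons h p =>
    rw [Walk.support_cons] at hz ⊢
    rw [List.tail_cons]
    rcases List.mem_cons.mp hz with rfl | hz
    · exact p.end_mem_support
    · exact hz

lemma cactus_aux_mem_rotate {V : Type*} [DecidableEq V] {G : SimpleGraph V} {a u : V}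
    {c : G.Walk a a} (hc : c.IsCycle) (hu : u ∈ c.support) {z : V} (hz : z ∈ c.support) :
    z ∈ (c.rotate u hu).support := by
  have h1 : z ∈ c.support.tail := cactus_aux_mem_tail c hc.ne_nil hz
  have h2 := (Walk.support_rotate c u hu).perm.mem_iff (a := z)
  have : z ∈ (c.rotate u hu).support.tail := h2.mpr h1
  rw [Walk.support_eq_cons (c.rotate u hu)]
  exact List.mem_cons_of_mem _ this

/-- **Edge-disjoint cycles of a cactus meet in at most one vertex.**  Let `G`
be a simple graph that is a cactus: any two cycles of `G` have equal edge sets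
or disjoint edge sets.  Then any two cycles of `G` with disjoint edge sets
share at most one vertex. -/
theorem cactus_cycles_share_at_most_one_vertex
    {V : Type*} [DecidableEq V] (G : SimpleGraph V)
    (hcactus : ∀ {a b : V} (c₁ : G.Walk a a) (c₂ : G.Walk b b),
      c₁.IsCycle → c₂.IsCycle →
        c₁.edges.toFinset = c₂.edges.toFinset ∨
          Disjoint c₁.edges.toFinset c₂.edges.toFinset)
    {a b : V} (c₁ : G.Walk a a) (c₂ : G.Walk b b)
    (h₁ : c₁.IsCycle) (h₂ : c₂.IsCycle)
    (hdisj : Disjoint c₁.edges.toFinset c₂.edges.toFinset) :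
    (c₁.support.toFinset ∩ c₂.support.toFinset).card ≤ 1 := by
  by_contra hcard
  push_neg at hcard
  obtain ⟨u, hu, v, hv, huv⟩ := Finset.one_lt_card.mp hcard
  simp only [Finset.mem_inter, List.mem_toFinset] at hu hv
  obtain ⟨hu1, hu2⟩ := hu
  obtain ⟨hv1, hv2⟩ := hv
  -- edge-level disjointness
  have hdisj' : ∀ e, e ∈ c₁.edges → e ∉ c₂.edges := by
    intro e he1 he2
    exact Finset.disjoint_left.mp hdisj (List.mem_toFinset.mpr he1)
      (List.mem_toFinset.mpr he2)
  -- a path P from u to v inside c₁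
  have hv1' : v ∈ (c₁.rotate u hu1).support := cactus_aux_mem_rotate h₁ hu1 hv1
  set P : G.Walk u v := ((c₁.rotate u hu1).takeUntil v hv1').bypass with hPdef
  have hP : P.IsPath := Walk.bypass_isPath _
  have hPe : P.edges ⊆ c₁.edges := by
    intro e he
    have h1 := Walk.edges_bypass_subset _ he
    have h2 := Walk.edges_takeUntil_subset (c₁.rotate u hu1) hv1' h1
    exact (Walk.rotate_edges c₁ u hu1).perm.mem_iff.mp h2
  have hPu : u ∈ P.support := P.start_mem_support
  have hPv : v ∈ P.support := P.end_mem_support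
  -- rotate c₂ at u and decompose as a cons
  have hC2cyc : (c₂.rotate u hu2).IsCycle := h₂.rotate hu2
  obtain ⟨x₁, hadj, T, hC2⟩ :
      ∃ (x₁ : V) (hadj : G.Adj u x₁) (T : G.Walk x₁ u),
        c₂.rotate u hu2 = Walk.cons hadj T := by
    cases hc : c₂.rotate u hu2 with
    | nil => rw [hc] at hC2cyc; exact absurd rfl hC2cyc.ne_nil
    | cons h p => exact ⟨_, h, p, rfl⟩
  rw [hC2] at hC2cyc
  obtain ⟨hTpath, hTe⟩ := (Walk.cons_isCycle_iff _ _).mp hC2cyc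
  have hC2e : ∀ e, e ∈ Walk.edges (Walk.cons hadj T) → e ∈ c₂.edges := by
    intro e he
    rw [← hC2] at he
    exact (Walk.rotate_edges c₂ u hu2).perm.mem_iff.mp he
  have hvT : v ∈ T.support := by
    have hvC2 : v ∈ (c₂.rotate u hu2).support := cactus_aux_mem_rotate h₂ hu2 hv2
    rw [hC2, Walk.support_cons] at hvC2
    rcases List.mem_cons.mp hvC2 with rfl | h
    · exact absurd rfl huv
    · exact h
  -- first vertex of T lying on P
  obtain ⟨w, hwS, R, hRe, ⟨rest, hrest⟩, hRS, hRP⟩ :=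
    cactus_aux_seg P.support T hPu
  have hRpath : R.IsPath := hRP hTpath
  -- w ≠ u
  have hwu : w ≠ u := by
    intro heq
    have hTnodup : T.support.Nodup := hTpath.support_nodup
    rw [hrest] at hTnodup
    have hdisjRr := (List.nodup_append.mp hTnodup).2.2
    have huRsup : u ∈ R.support := heq ▸ R.end_mem_support
    rcases List.eq_nil_or_concat rest with rfl | ⟨l, e, rfl⟩
    · have hvR : v ∈ R.support := by
        have h' := hvT
        rw [hrest, List.append_nil] at h'
        exact h'
      exact huv ((hRS v hvR hPv).trans heq).symm
    · have h1 : T.support.getLast? = some u := by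
        rw [List.getLast?_eq_getLast (Walk.support_ne_nil _), T.getLast_support]
      rw [hrest, List.concat_eq_append, ← List.append_assoc, List.getLast?_concat] at h1
      have he : e = u := by injection h1
      exact hdisjRr u huRsup u (by rw [List.concat_eq_append]; exact List.mem_append_right _ (he ▸ List.mem_singleton_self _)) rfl
  have huR : u ∉ R.support := fun h => hwu ((hRS u h hPu).symm ▸ rfl)
  -- Q : a path from u to w inside c₂
  set Q : G.Walk u w := Walk.cons hadj R with hQdef
  have hQpath : Q.IsPath := by
    rw [hQdef, Walk.cons_isPath_iff]
    exact ⟨hRpath, huR⟩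
  have hQe : Q.edges ⊆ c₂.edges := by
    intro e he
    rw [hQdef, Walk.edges_cons, List.mem_cons] at he
    apply hC2e
    rw [Walk.edges_cons, List.mem_cons]
    exact he.imp id (fun h' => hRe h')
  have hQsup : ∀ z ∈ Q.support, z ∈ P.support → z = u ∨ z = w := by
    intro z hz hzP
    rw [hQdef, Walk.support_cons, List.mem_cons] at hz
    rcases hz with rfl | hz
    · exact Or.inl rfl
    · exact Or.inr (hRS z hz hzP)
  -- P₁ : the part of P from u to w
  set P₁ : G.Walk u w := P.takeUntil w hwS with hP1def
  have hP1path : P₁.IsPath := hP.takeUntil hwS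
  have hP1e : P₁.edges ⊆ c₁.edges := fun e he =>
    hPe (Walk.edges_takeUntil_subset P hwS he)
  have hP1sup : P₁.support ⊆ P.support := Walk.support_takeUntil_subset P hwS
  -- the glued cycle c₃
  set c₃ : G.Walk u u := Q.append P₁.reverse with hc3def
  have hc3 : c₃.IsCycle := by
    rw [Walk.isCycle_def]
    refine ⟨?_, ?_, ?_⟩
    · -- trail
      rw [Walk.isTrail_def, hc3def, Walk.edges_append, List.nodup_append]
      refine ⟨hQpath.isTrail.edges_nodup, hP1path.reverse.isTrail.edges_nodup, ?_⟩
      intro e heQ e' heP hee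
      rw [← hee] at heP
      have he2 : e ∈ c₂.edges := hQe heQ
      have he1 : e ∈ c₁.edges := by
        rw [Walk.edges_reverse, List.mem_reverse] at heP
        exact hP1e heP
      exact hdisj' e he1 he2
    · -- not nil
      intro hnil
      have hmem : s(u, x₁) ∈ c₃.edges := by
        rw [hc3def, Walk.edges_append, hQdef, Walk.edges_cons]
        exact List.mem_append_left _ (List.mem_cons_self)
      rw [hc3def] at hnil
      rw [hc3def, hnil] at hmem
      simp at hmem
    · -- support tail nodup
      rw [hc3def, Walk.tail_support_append, List.nodup_append]
      have hQt : Q.support.tail = R.support := by rw [hQdef, Walk.support_cons]; rfl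
      refine ⟨?_, ?_, ?_⟩
      · rw [hQt]; exact hRpath.support_nodup
      · exact (hP1path.reverse.support_nodup).tail
      · rw [hQt]
        intro z hzR z' hzP hzz
        rw [← hzz] at hzP
        -- z in R.support and in tail of P₁.reverse.support
        have hzP1 : z ∈ P₁.reverse.support := by
          rw [Walk.support_eq_cons P₁.reverse]
          exact List.mem_cons_of_mem _ hzP
        have hzw : z = w := by
          apply hRS z hzR
          apply hP1sup
          rw [Walk.support_reverse, List.mem_reverse] at hzP1
          exact hzP1
        -- but w is the head of P₁.reverse.support, not in its tail
        have hnd := hP1path.reverse.support_nodup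
        rw [Walk.support_eq_cons P₁.reverse, List.nodup_cons] at hnd
        exact hnd.1 (hzw ▸ hzP)
  -- P₁ is nonempty: extract one of its edges
  have hP1notnil : ¬ P₁.Nil := Walk.not_nil_of_ne hwu.symm
  obtain ⟨e₁, he₁⟩ : ∃ e, e ∈ P₁.edges := by
    rw [Walk.not_nil_iff] at hP1notnil
    obtain ⟨x, hx, p', hp'⟩ := hP1notnil
    exact ⟨s(u, x), by rw [hp', Walk.edges_cons]; exact List.mem_cons_self⟩
  have he₁c3 : e₁ ∈ c₃.edges := by
    rw [hc3def, Walk.edges_append, List.mem_append]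
    exact Or.inr (by rw [Walk.edges_reverse, List.mem_reverse]; exact he₁)
  have he₁c1 : e₁ ∈ c₁.edges := hP1e he₁
  have hec3 : s(u, x₁) ∈ c₃.edges := by
    rw [hc3def, Walk.edges_append, List.mem_append, hQdef, Walk.edges_cons]
    exact Or.inl (List.mem_cons_self)
  have hec2 : s(u, x₁) ∈ c₂.edges := by
    apply hC2e
    rw [Walk.edges_cons]
    exact List.mem_cons_self
  rcases hcactus c₃ c₂ hc3 h₂ with heq | hdj
  · -- equal edge sets: e₁ would be an edge of both c₁ and c₂
    have : e₁ ∈ c₂.edges := by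
      have := heq ▸ List.mem_toFinset.mpr he₁c3
      exact List.mem_toFinset.mp this
    exact hdisj' e₁ he₁c1 this
  · -- disjoint edge sets: but s(u, x₁) is an edge of both c₃ and c₂
    exact Finset.disjoint_left.mp hdj (List.mem_toFinset.mpr hec3)
      (List.mem_toFinset.mpr hec2)
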